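/- Let A ⊆ B(X) be an abelian, unital, norm-closed subalgebra of split strict multiplicity 2, with X = Ax₁ ⊕ Ax₂. Then the diagonal subspace D₂ = {ax₁ ⊕ ax₂ : a ∈ A} is a closed subspace of X. -/

import Mathlib

open ContinuousLinearMap Function

set_option maxHeartbeats 8000000

/-- If `A ⊆ B(X)` is an abelian, unital, norm-closed operator algebra with
split strict multiplicity 2, `X = Ax₁ ⊕ Ax₂`, then the diagonal
`D₂ = {a x₁ ⊕ a x₂ : a ∈ A}` is closed in `X`. -/
theorem stmt3 {X : Type*} [NormedAddCommGroup X] [NormedSpace ℂ X] [CompleteSpace X]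
    (A : Subalgebra ℂ (X →L[ℂ] X))
    (hA : IsClosed (A : Set (X →L[ℂ] X)))
    (hcomm : ∀ a ∈ A, ∀ b ∈ A, a * b = b * a)
    (x₁ x₂ : X)
    (hc1 : IsClosed {y : X | ∃ a ∈ A, a x₁ = y})
    (hc2 : IsClosed {y : X | ∃ a ∈ A, a x₂ = y})
    (hspan : ∀ y : X, ∃ a ∈ A, ∃ b ∈ A, y = a x₁ + b x₂)
    (hind : ∀ a ∈ A, ∀ b ∈ A, a x₁ + b x₂ = 0 → a x₁ = 0 ∧ b x₂ = 0) :
    IsClosed {y : X | ∃ a ∈ A, y = a x₁ + a x₂} := by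
  classical
  haveI hAcs : CompleteSpace A.toSubmodule := hA.completeSpace_coe
  set e₁ : (X →L[ℂ] X) →L[ℂ] X := ContinuousLinearMap.apply ℂ X x₁ with he₁
  set e₂ : (X →L[ℂ] X) →L[ℂ] X := ContinuousLinearMap.apply ℂ X x₂ with he₂
  set Y₁ : Submodule ℂ X := A.toSubmodule.map (e₁ : (X →L[ℂ] X) →ₗ[ℂ] X) with hY₁def
  set Y₂ : Submodule ℂ X := A.toSubmodule.map (e₂ : (X →L[ℂ] X) →ₗ[ℂ] X) with hY₂def
  have hY₁mem : ∀ y : X, y ∈ Y₁ ↔ ∃ a ∈ A, a x₁ = y := by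
    intro y
    simp [hY₁def, Submodule.mem_map, Subalgebra.mem_toSubmodule, he₁]
  have hY₂mem : ∀ y : X, y ∈ Y₂ ↔ ∃ a ∈ A, a x₂ = y := by
    intro y
    simp [hY₂def, Submodule.mem_map, Subalgebra.mem_toSubmodule, he₂]
  have hY₁closed : IsClosed (Y₁ : Set X) := by
    have : (Y₁ : Set X) = {y : X | ∃ a ∈ A, a x₁ = y} := Set.ext fun y => hY₁mem y
    rw [this]; exact hc1
  have hY₂closed : IsClosed (Y₂ : Set X) := by
    have : (Y₂ : Set X) = {y : X | ∃ a ∈ A, a x₂ = y} := Set.ext fun y => hY₂mem y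
    rw [this]; exact hc2
  haveI : CompleteSpace Y₁ := hY₁closed.completeSpace_coe
  haveI : CompleteSpace Y₂ := hY₂closed.completeSpace_coe
  have hmem₁ : ∀ a ∈ A, a x₁ ∈ Y₁ := fun a ha => (hY₁mem _).2 ⟨a, ha, rfl⟩
  have hmem₂ : ∀ a ∈ A, a x₂ ∈ Y₂ := fun a ha => (hY₂mem _).2 ⟨a, ha, rfl⟩
  -- the sum map  Y₁ × Y₂ → X
  set Φ : (Y₁ × Y₂) →L[ℂ] X := Y₁.subtypeL.coprod Y₂.subtypeL with hΦdef
  have hΦapp : ∀ p : Y₁ × Y₂, Φ p = (p.1 : X) + (p.2 : X) := fun p => rfl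
  have hker : Φ.ker = ⊥ := by
    rw [LinearMap.ker_eq_bot']
    intro p hp
    rw [ContinuousLinearMap.coe_coe, hΦapp] at hp
    obtain ⟨a, ha, hax⟩ := (hY₁mem _).1 p.1.2
    obtain ⟨b, hb, hbx⟩ := (hY₂mem _).1 p.2.2
    have h0 := hind a ha b hb (by rw [hax, hbx]; exact hp)
    have h1 : (p.1 : X) = 0 := hax ▸ h0.1
    have h2 : (p.2 : X) = 0 := hbx ▸ h0.2
    exact Prod.ext (Subtype.ext h1) (Subtype.ext h2)
  have hrange : Φ.range = ⊤ := by
    rw [LinearMap.range_eq_top]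
    intro y
    obtain ⟨a, ha, b, hb, hy⟩ := hspan y
    exact ⟨(⟨a x₁, hmem₁ a ha⟩, ⟨b x₂, hmem₂ b hb⟩), by rw [ContinuousLinearMap.coe_coe, hΦapp]; exact hy.symm⟩
  set Φe : (Y₁ × Y₂) ≃L[ℂ] X := ContinuousLinearEquiv.ofBijective Φ hker hrange with hΦe
  have hΦefwd : ∀ p : Y₁ × Y₂, Φe p = (p.1 : X) + (p.2 : X) := fun p => hΦapp p
  -- an opaque constant bounding the inverse
  obtain ⟨M, hMnn, hMb⟩ : ∃ M : ℝ, 0 ≤ M ∧ ∀ x : X, ‖Φe.symm x‖ ≤ M * ‖x‖ :=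
    ⟨‖(Φe.symm : X →L[ℂ] (Y₁ × Y₂))‖, ContinuousLinearMap.opNorm_nonneg _,
      fun x => (Φe.symm : X →L[ℂ] (Y₁ × Y₂)).le_opNorm x⟩
  have hdec : ∀ (u : Y₁) (v : Y₂), Φe.symm ((u : X) + (v : X)) = (u, v) := by
    intro u v
    apply Φe.injective
    rw [Φe.apply_symm_apply, hΦefwd]
  have hbound : ∀ (u : Y₁) (v : Y₂),
      ‖(u : X)‖ ≤ M * ‖(u : X) + (v : X)‖ ∧ ‖(v : X)‖ ≤ M * ‖(u : X) + (v : X)‖ := by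
    intro u v
    have h1 : ‖Φe.symm ((u : X) + (v : X))‖ ≤ M * ‖(u : X) + (v : X)‖ := hMb _
    rw [hdec u v] at h1
    refine ⟨le_trans ?_ h1, le_trans ?_ h1⟩
    · exact le_trans (le_of_eq (Submodule.coe_norm u).symm) (norm_fst_le (u, v))
    · exact le_trans (le_of_eq (Submodule.coe_norm v).symm) (norm_snd_le (u, v))
  -- surjections onto Y₁, Y₂ with bounded preimages (open mapping theorem)
  set f₁ : A.toSubmodule →L[ℂ] Y₁ :=
    (e₁.comp A.toSubmodule.subtypeL).codRestrict Y₁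
      (fun a => hmem₁ a.1 a.2) with hf₁
  set f₂ : A.toSubmodule →L[ℂ] Y₂ :=
    (e₂.comp A.toSubmodule.subtypeL).codRestrict Y₂
      (fun a => hmem₂ a.1 a.2) with hf₂
  have hf₁surj : Surjective f₁ := by
    rintro ⟨y, hy⟩
    obtain ⟨a, ha, hax⟩ := (hY₁mem _).1 hy
    exact ⟨⟨a, ha⟩, Subtype.ext hax⟩
  have hf₂surj : Surjective f₂ := by
    rintro ⟨y, hy⟩
    obtain ⟨a, ha, hax⟩ := (hY₂mem _).1 hy
    exact ⟨⟨a, ha⟩, Subtype.ext hax⟩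
  -- bounded preimages, phrased opaquely
  obtain ⟨C₁, hC₁pos, hC₁⟩ : ∃ C₁ > (0:ℝ), ∀ u : Y₁, ∃ b ∈ A,
      b x₁ = (u : X) ∧ ‖b‖ ≤ C₁ * ‖(u : X)‖ := by
    obtain ⟨C, hCpos, hC⟩ := f₁.exists_preimage_norm_le (E := A.toSubmodule) (F := Y₁) (σ' := RingHom.id ℂ) hf₁surj
    refine ⟨C, hCpos, fun u => ?_⟩
    obtain ⟨b', hb'1, hb'2⟩ := hC u
    refine ⟨(b' : X →L[ℂ] X), b'.2, congrArg Subtype.val hb'1, ?_⟩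
    calc ‖(b' : X →L[ℂ] X)‖ = ‖b'‖ := (Submodule.coe_norm b').symm
      _ ≤ C * ‖u‖ := hb'2
      _ = C * ‖(u : X)‖ := by rw [Submodule.coe_norm u]
  obtain ⟨C₂, hC₂pos, hC₂⟩ : ∃ C₂ > (0:ℝ), ∀ v : Y₂, ∃ c ∈ A,
      c x₂ = (v : X) ∧ ‖c‖ ≤ C₂ * ‖(v : X)‖ := by
    obtain ⟨C, hCpos, hC⟩ := f₂.exists_preimage_norm_le (E := A.toSubmodule) (F := Y₂) (σ' := RingHom.id ℂ) hf₂surj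
    refine ⟨C, hCpos, fun v => ?_⟩
    obtain ⟨c', hc'1, hc'2⟩ := hC v
    refine ⟨(c' : X →L[ℂ] X), c'.2, congrArg Subtype.val hc'1, ?_⟩
    calc ‖(c' : X →L[ℂ] X)‖ = ‖c'‖ := (Submodule.coe_norm c').symm
      _ ≤ C * ‖v‖ := hc'2
      _ = C * ‖(v : X)‖ := by rw [Submodule.coe_norm v]
  -- key estimate:  ‖a‖ ≤ M (C₁ + C₂) (‖a x₁‖ + ‖a x₂‖)
  have key : ∀ a ∈ A, ‖a‖ ≤ (M * (C₁ + C₂)) * (‖a x₁‖ + ‖a x₂‖) := by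
    intro a ha
    apply ContinuousLinearMap.opNorm_le_bound _ (by positivity)
    intro y
    -- decompose y through Φe
    obtain ⟨u, v, huv⟩ : ∃ (u : Y₁) (v : Y₂), (u : X) + (v : X) = y := by
      refine ⟨(Φe.symm y).1, (Φe.symm y).2, ?_⟩
      rw [← hΦefwd, Φe.apply_symm_apply]
    have hu : ‖(u : X)‖ ≤ M * ‖y‖ := by
      have := (hbound u v).1; rwa [huv] at this
    have hv : ‖(v : X)‖ ≤ M * ‖y‖ := by
      have := (hbound u v).2; rwa [huv] at this
    obtain ⟨b, hb, hbx, hbn⟩ := hC₁ u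
    obtain ⟨c, hc, hcx, hcn⟩ := hC₂ v
    have hbn' : ‖b‖ ≤ C₁ * (M * ‖y‖) :=
      le_trans hbn (mul_le_mul_of_nonneg_left hu hC₁pos.le)
    have hcn' : ‖c‖ ≤ C₂ * (M * ‖y‖) :=
      le_trans hcn (mul_le_mul_of_nonneg_left hv hC₂pos.le)
    have hay : a y = b (a x₁) + c (a x₂) := by
      have h1 : a (b x₁) = b (a x₁) := by
        rw [← ContinuousLinearMap.mul_apply, ← ContinuousLinearMap.mul_apply,
          hcomm a ha b hb]
      have h2 : a (c x₂) = c (a x₂) := by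
        rw [← ContinuousLinearMap.mul_apply, ← ContinuousLinearMap.mul_apply,
          hcomm a ha c hc]
      rw [← huv, ← hbx, ← hcx, map_add, h1, h2]
    calc ‖a y‖ = ‖b (a x₁) + c (a x₂)‖ := by rw [hay]
      _ ≤ ‖b (a x₁)‖ + ‖c (a x₂)‖ := norm_add_le _ _
      _ ≤ ‖b‖ * ‖a x₁‖ + ‖c‖ * ‖a x₂‖ :=
          add_le_add (b.le_opNorm _) (c.le_opNorm _)
      _ ≤ (C₁ * (M * ‖y‖)) * ‖a x₁‖ + (C₂ * (M * ‖y‖)) * ‖a x₂‖ :=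
          add_le_add (mul_le_mul_of_nonneg_right hbn' (norm_nonneg _))
            (mul_le_mul_of_nonneg_right hcn' (norm_nonneg _))
      _ ≤ (M * (C₁ + C₂)) * (‖a x₁‖ + ‖a x₂‖) * ‖y‖ := by
          nlinarith [norm_nonneg (a x₁), norm_nonneg (a x₂), norm_nonneg y,
            hC₁pos.le, hC₂pos.le, hMnn,
            mul_nonneg (mul_nonneg hMnn (norm_nonneg y))
              (mul_nonneg hC₂pos.le (norm_nonneg (a x₁))),
            mul_nonneg (mul_nonneg hMnn (norm_nonneg y))
              (mul_nonneg hC₁pos.le (norm_nonneg (a x₂)))]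
  -- second estimate: ‖a x₁‖ + ‖a x₂‖ ≤ 2 M ‖a x₁ + a x₂‖
  have key2 : ∀ a ∈ A, ‖a x₁‖ + ‖a x₂‖ ≤ (2 * M) * ‖a x₁ + a x₂‖ := by
    intro a ha
    have h := hbound ⟨a x₁, hmem₁ a ha⟩ ⟨a x₂, hmem₂ a ha⟩
    simp only [Submodule.coe_mk] at h
    linarith [h.1, h.2]
  -- the diagonal map
  set T : A.toSubmodule →L[ℂ] X := (e₁ + e₂).comp A.toSubmodule.subtypeL with hT
  have hTapp : ∀ a : A.toSubmodule, T a = (a : X →L[ℂ] X) x₁ + (a : X →L[ℂ] X) x₂ :=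
    fun a => rfl
  obtain ⟨K, hKnn, hanti⟩ : ∃ K : ℝ, 0 ≤ K ∧ ∀ a : A.toSubmodule, ‖a‖ ≤ K * ‖T a‖ := by
    refine ⟨(M * (C₁ + C₂)) * (2 * M), by positivity, fun a => ?_⟩
    have h1 := key (a : X →L[ℂ] X) a.2
    have h2 := key2 (a : X →L[ℂ] X) a.2
    rw [hTapp]
    calc ‖a‖ = ‖(a : X →L[ℂ] X)‖ := Submodule.coe_norm a
      _ ≤ (M * (C₁ + C₂)) * (‖(a : X →L[ℂ] X) x₁‖ + ‖(a : X →L[ℂ] X) x₂‖) := h1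
      _ ≤ (M * (C₁ + C₂)) * ((2 * M) * ‖(a : X →L[ℂ] X) x₁ + (a : X →L[ℂ] X) x₂‖) :=
          mul_le_mul_of_nonneg_left h2 (by positivity)
      _ = (M * (C₁ + C₂)) * (2 * M) * ‖(a : X →L[ℂ] X) x₁ + (a : X →L[ℂ] X) x₂‖ := by
          ring
  have hAL : AntilipschitzWith K.toNNReal T :=
    T.antilipschitz_of_bound (fun a => by
      rw [Real.coe_toNNReal K hKnn]; exact hanti a)
  have hclosed : IsClosed (Set.range T) :=
    hAL.isClosed_range T.uniformContinuous
  convert hclosed using 1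
  ext y
  constructor
  · rintro ⟨a, ha, rfl⟩
    exact ⟨⟨a, ha⟩, (hTapp ⟨a, ha⟩).symm⟩
  · rintro ⟨a, rfl⟩
    exact ⟨(a : X →L[ℂ] X), a.2, (hTapp a).symm⟩
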